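/- arXiv:1306.1185 — 6 statements merged into one kernel-verified Lean document; each statement's English description precedes it below -/
import Mathlib

section
/- Let A ⊆ V with k + 1 ≤ N where k = ⌊N/(λ+1)⌋, and let f = 1_A. Then ‖f − med_λ(f)·1‖_{1,λ} = min{λ|A|, |A^c|}. -/
/-- Asymmetric absolute value: `|t|_λ = λt` if `t ≥ 0` and `-t` if `t < 0`. -/
noncomputable def asymAbs (lam t : ℝ) : ℝ := if 0 ≤ t then lam * t else -t

/-- Asymmetric ℓ¹-norm: `‖f‖_{1,λ} = ∑ i, |f xᵢ|_λ`. -/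
noncomputable def asymNorm (N : ℕ) (lam : ℝ) (f : Fin N → ℝ) : ℝ := ∑ i, asymAbs lam (f i)

/-- The λ-median of `f`: the (k+1)-st largest entry (counted with multiplicity)
of the vector `(f x₁, …, f x_N)`, where `k = ⌊N/(λ+1)⌋`. -/
noncomputable def lamMedian (N : ℕ) (lam : ℝ) (f : Fin N → ℝ) : ℝ :=
  ((Finset.univ.val.map f).sort (· ≥ ·)).getD (Nat.floor ((N : ℝ) / (lam + 1))) 0

/-- Indicator function of `A`. -/
def indicatorFun (N : ℕ) (A : Finset (Fin N)) : Fin N → ℝ :=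
  fun i => if i ∈ A then 1 else 0

lemma sorted_rep (n : ℕ) (x : ℝ) : List.Pairwise (· ≥ ·) (List.replicate n x) := by
  induction n with
  | zero => simp
  | succ n ih =>
    rw [List.replicate_succ]
    exact List.pairwise_cons.mpr ⟨fun y hy => by simp [List.eq_of_mem_replicate hy], ih⟩

lemma sort_ind (N : ℕ) (A : Finset (Fin N)) :
    ((Finset.univ.val.map (indicatorFun N A)).sort (· ≥ ·))
      = List.replicate A.card 1 ++ List.replicate Aᶜ.card 0 := by
  refine (fun hp h1 h2 => List.Perm.eq_of_pairwise' (r := (· ≥ ·)) h1 h2 hp) ?_ ?_ ?_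
  · rw [← Multiset.coe_eq_coe, Multiset.sort_eq, ← Multiset.coe_add,
      Multiset.coe_replicate, Multiset.coe_replicate]
    have hu : (Finset.univ : Finset (Fin N)) = A.disjUnion Aᶜ disjoint_compl_right := by
      ext i; simp
    rw [hu]
    show Multiset.map _ (A.val + Aᶜ.val) = _
    rw [Multiset.map_add]
    congr 1
    · rw [Multiset.eq_replicate]
      refine ⟨by simp, fun b hb => ?_⟩
      obtain ⟨i, hi, rfl⟩ := Multiset.mem_map.mp hb
      simp_all [indicatorFun]
    · rw [Multiset.eq_replicate]
      refine ⟨by simp, fun b hb => ?_⟩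
      obtain ⟨i, hi, rfl⟩ := Multiset.mem_map.mp hb
      simp_all [indicatorFun]
  · exact (Finset.univ.val.map (indicatorFun N A)).pairwise_sort _
  · rw [List.pairwise_append]
    refine ⟨sorted_rep _ _, sorted_rep _ _, fun x hx y hy => ?_⟩
    rw [List.eq_of_mem_replicate hx, List.eq_of_mem_replicate hy]
    norm_num

lemma median_ind (N : ℕ) (lam : ℝ)
    (hk : Nat.floor ((N : ℝ) / (lam + 1)) + 1 ≤ N) (A : Finset (Fin N)) :
    lamMedian N lam (indicatorFun N A)
      = if Nat.floor ((N : ℝ) / (lam + 1)) < A.card then 1 else 0 := by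
  set k := Nat.floor ((N : ℝ) / (lam + 1)) with hkdef
  have hcard : A.card ≤ N := by simpa using A.card_le_univ
  have hlen : (List.replicate A.card (1:ℝ) ++ List.replicate Aᶜ.card 0).length = N := by
    simp [Finset.card_compl]
    omega
  rw [lamMedian, sort_ind, List.getD_eq_getElem _ _ (by rw [hlen]; omega)]
  by_cases h : k < A.card
  · rw [List.getElem_append_left (by simpa using h)]
    simp [h]
  · rw [List.getElem_append_right (by simpa using not_lt.mp h)]
    simp [h]


/-- for `f = 1_A`, one has `‖f − med_λ(f)·1‖_{1,λ} = min{λ|A|, |Aᶜ|}`. -/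
theorem asymNorm_indicator_sub_median (N : ℕ) (hN : 0 < N) (lam : ℝ) (hlam : 0 < lam)
    (hk : Nat.floor ((N : ℝ) / (lam + 1)) + 1 ≤ N) (A : Finset (Fin N)) :
    asymNorm N lam
        (fun i => indicatorFun N A i - lamMedian N lam (indicatorFun N A))
      = min (lam * (A.card : ℝ)) ((Aᶜ.card : ℝ)) := by
  set k := Nat.floor ((N : ℝ) / (lam + 1)) with hkdef
  have hcard : A.card ≤ N := by simpa using A.card_le_univ
  have hccard : (Aᶜ.card : ℝ) = (N : ℝ) - A.card := by
    rw [Finset.card_compl, Fintype.card_fin, Nat.cast_sub hcard]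
  rw [median_ind N lam hk A, ← hkdef]
  by_cases h : k < A.card
  · -- median = 1, answer |Aᶜ|
    rw [if_pos h]
    have hsum : asymNorm N lam (fun i => indicatorFun N A i - 1) = (Aᶜ.card : ℝ) := by
      rw [asymNorm]
      have : ∀ i, asymAbs lam (indicatorFun N A i - 1) = if i ∈ Aᶜ then (1:ℝ) else 0 := by
        intro i
        by_cases hi : i ∈ A <;> simp [indicatorFun, asymAbs, hi]
      rw [Finset.sum_congr rfl fun i _ => this i, Finset.sum_ite_mem,
        Finset.univ_inter, Finset.sum_const, nsmul_eq_mul, mul_one]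
    rw [hsum, min_eq_right]
    -- need |Aᶜ| ≤ lam * |A|
    have h1 : (N : ℝ) / (lam + 1) < (k : ℝ) + 1 := Nat.lt_floor_add_one _
    have h2 : ((k : ℝ) + 1) ≤ (A.card : ℝ) := by exact_mod_cast h
    have hl1 : (0:ℝ) < lam + 1 := by linarith
    have : (N : ℝ) < (A.card : ℝ) * (lam + 1) := by
      calc (N : ℝ) = (N : ℝ) / (lam + 1) * (lam + 1) := by field_simp
      _ < ((k : ℝ) + 1) * (lam + 1) := by exact mul_lt_mul_of_pos_right h1 hl1
      _ ≤ (A.card : ℝ) * (lam + 1) := by nlinarith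
    rw [hccard]; nlinarith
  · -- median = 0, answer lam * |A|
    rw [if_neg h]
    have hsum : asymNorm N lam (fun i => indicatorFun N A i - 0) = lam * (A.card : ℝ) := by
      rw [asymNorm]
      have : ∀ i, asymAbs lam (indicatorFun N A i - 0) = if i ∈ A then lam else 0 := by
        intro i
        by_cases hi : i ∈ A <;> simp [indicatorFun, asymAbs, hi, le_of_lt hlam]
      rw [Finset.sum_congr rfl fun i _ => this i, Finset.sum_ite_mem,
        Finset.univ_inter, Finset.sum_const, nsmul_eq_mul, mul_comm]
    rw [hsum, min_eq_left]
    have h2 : (A.card : ℝ) ≤ (k : ℝ) := by exact_mod_cast not_lt.mp h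
    have h1 : (k : ℝ) ≤ (N : ℝ) / (lam + 1) := Nat.floor_le (by positivity)
    have hl1 : (0:ℝ) < lam + 1 := by linarith
    have : (A.card : ℝ) * (lam + 1) ≤ (N : ℝ) := by
      calc (A.card : ℝ) * (lam + 1) ≤ (N : ℝ) / (lam + 1) * (lam + 1) := by nlinarith
      _ = N := by field_simp
    rw [hccard]; nlinarith
end

section
/- (Theorem 1) Let A be a nonempty proper subset of V and let f = 1_A be its indicator function, with k + 1 ≤ N where k = ⌊N/(λ+1)⌋. Then ‖f‖_TV / ‖f − med_λ(f)·1‖_{1,λ} = 2·Cut(A, A^c) / min{λ|A|, |A^c|}. -/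
/-- Total variation of a vertex function on the weighted graph with weights `w`. -/
def totalVariation (N : ℕ) (w : Fin N → Fin N → ℝ) (f : Fin N → ℝ) : ℝ :=
  ∑ i, ∑ j, w i j * |f i - f j|

/-- Cut value between `A` and its complement. -/
def cutValue (N : ℕ) (w : Fin N → Fin N → ℝ) (A : Finset (Fin N)) : ℝ :=
  ∑ i ∈ A, ∑ j ∈ Aᶜ, w i j

lemma indicator_multiset_eq (N : ℕ) (A : Finset (Fin N)) :
    Finset.univ.val.map (indicatorFun N A)
      = Multiset.replicate A.card (1:ℝ) + Multiset.replicate Aᶜ.card (0:ℝ) := by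
  have h : (A.disjUnion Aᶜ disjoint_compl_right) = Finset.univ := by
    simp [Finset.disjUnion_eq_union]
  have hval : (Finset.univ : Finset (Fin N)).val = A.val + Aᶜ.val := by
    rw [← h]; rfl
  have h1 : A.val.map (indicatorFun N A) = Multiset.replicate A.card (1:ℝ) := by
    have : A.val.map (indicatorFun N A) = A.val.map (fun _ => (1:ℝ)) :=
      Multiset.map_congr rfl (fun x hx => by
        simp only [indicatorFun, if_pos (show x ∈ A from hx)])
    rw [this, Multiset.map_const']; rfl
  have h2 : Aᶜ.val.map (indicatorFun N A) = Multiset.replicate Aᶜ.card (0:ℝ) := by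
    have : Aᶜ.val.map (indicatorFun N A) = Aᶜ.val.map (fun _ => (0:ℝ)) :=
      Multiset.map_congr rfl (fun x hx => by
        have hx' : x ∉ A := by simpa using (Finset.mem_compl.mp hx)
        simp only [indicatorFun, if_neg hx'])
    rw [this, Multiset.map_const']; rfl
  rw [hval, Multiset.map_add, h1, h2]

lemma indicator_sort_eq (N : ℕ) (A : Finset (Fin N)) :
    ((Finset.univ.val.map (indicatorFun N A)).sort (· ≥ ·))
      = List.replicate A.card (1:ℝ) ++ List.replicate Aᶜ.card (0:ℝ) := by
  haveI : IsAntisymm ℝ (· ≥ ·) := ⟨fun a b h1 h2 => le_antisymm h2 h1⟩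
  refine (fun h1 h2 h3 => List.Perm.eq_of_pairwise' (r := (· ≥ ·)) h2 h3 h1) ?_ ?_ ?_
  · rw [← Multiset.coe_eq_coe, Multiset.sort_eq, indicator_multiset_eq]
    simp [Multiset.replicate]
  · exact Multiset.pairwise_sort _ _
  · rw [List.pairwise_append]
    refine ⟨?_, ?_, ?_⟩
    · exact List.pairwise_replicate.2 (Or.inr le_rfl)
    · exact List.pairwise_replicate.2 (Or.inr le_rfl)
    · intro a ha b hb
      rw [List.eq_of_mem_replicate ha, List.eq_of_mem_replicate hb]
      norm_num

lemma indicator_median_eq (N : ℕ) (lam : ℝ) (A : Finset (Fin N))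
    (hk : Nat.floor ((N : ℝ) / (lam + 1)) + 1 ≤ N) :
    lamMedian N lam (indicatorFun N A)
      = if Nat.floor ((N : ℝ) / (lam + 1)) < A.card then (1:ℝ) else 0 := by
  set k := Nat.floor ((N : ℝ) / (lam + 1)) with hkdef
  rw [lamMedian, indicator_sort_eq]
  by_cases h : k < A.card
  · rw [if_pos h, List.getD_append _ _ _ _ (by simpa using h),
      List.getD_eq_getElem _ _ (by simpa using h)]
    simp
  · rw [if_neg h]
    push_neg at h
    have hlen : (List.replicate A.card (1:ℝ)).length ≤ k := by simpa using h
    rw [List.getD_append_right _ _ _ _ hlen]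
    have hk2 : k - A.card < Aᶜ.card := by
      have h3 := Finset.card_add_card_compl A
      rw [Fintype.card_fin] at h3
      omega
    rw [List.getD_eq_getElem _ _ (by simpa using hk2)]
    simp

lemma tv_eq_two_cut (N : ℕ) (w : Fin N → Fin N → ℝ)
    (hsymm : ∀ i j, w i j = w j i) (A : Finset (Fin N)) :
    totalVariation N w (indicatorFun N A) = 2 * cutValue N w A := by
  unfold totalVariation cutValue
  rw [← Finset.sum_add_sum_compl A
    (fun i => ∑ j, w i j * |indicatorFun N A i - indicatorFun N A j|)]
  have e1 : ∑ i ∈ A, ∑ j, w i j * |indicatorFun N A i - indicatorFun N A j|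
      = ∑ i ∈ A, ∑ j ∈ Aᶜ, w i j := by
    refine Finset.sum_congr rfl (fun i hi => ?_)
    rw [← Finset.sum_add_sum_compl A (fun j => w i j * |indicatorFun N A i - indicatorFun N A j|)]
    have z : ∑ j ∈ A, w i j * |indicatorFun N A i - indicatorFun N A j| = 0 :=
      Finset.sum_eq_zero (fun j hj => by simp [indicatorFun, hi, hj])
    have o : ∑ j ∈ Aᶜ, w i j * |indicatorFun N A i - indicatorFun N A j| = ∑ j ∈ Aᶜ, w i j := by
      refine Finset.sum_congr rfl (fun j hj => ?_)
      have hj' : j ∉ A := Finset.mem_compl.mp hj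
      simp [indicatorFun, hi, hj']
    rw [z, o, zero_add]
  have e2 : ∑ i ∈ Aᶜ, ∑ j, w i j * |indicatorFun N A i - indicatorFun N A j|
      = ∑ i ∈ A, ∑ j ∈ Aᶜ, w i j := by
    have : ∑ i ∈ Aᶜ, ∑ j, w i j * |indicatorFun N A i - indicatorFun N A j|
        = ∑ i ∈ Aᶜ, ∑ j ∈ A, w i j := by
      refine Finset.sum_congr rfl (fun i hi => ?_)
      have hi' : i ∉ A := Finset.mem_compl.mp hi
      rw [← Finset.sum_add_sum_compl A (fun j => w i j * |indicatorFun N A i - indicatorFun N A j|)]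
      have z : ∑ j ∈ Aᶜ, w i j * |indicatorFun N A i - indicatorFun N A j| = 0 :=
        Finset.sum_eq_zero (fun j hj => by
          have hj' : j ∉ A := Finset.mem_compl.mp hj
          simp [indicatorFun, hi', hj'])
      have o : ∑ j ∈ A, w i j * |indicatorFun N A i - indicatorFun N A j| = ∑ j ∈ A, w i j := by
        refine Finset.sum_congr rfl (fun j hj => ?_)
        simp [indicatorFun, hi', hj]
      rw [z, o, add_zero]
    rw [this, Finset.sum_comm]
    exact Finset.sum_congr rfl (fun i _ => Finset.sum_congr rfl (fun j _ => hsymm j i))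
  rw [e1, e2]; ring

/-- Theorem 1: for a nonempty proper subset `A` and `f = 1_A`,
`‖f‖_TV / ‖f − med_λ(f)·1‖_{1,λ} = 2 Cut(A, Aᶜ) / min{λ|A|, |Aᶜ|}`. -/
theorem tv_ratio_eq_balanced_cut (N : ℕ) (hN : 0 < N) (w : Fin N → Fin N → ℝ)
    (hsymm : ∀ i j, w i j = w j i) (hnonneg : ∀ i j, 0 ≤ w i j)
    (lam : ℝ) (hlam : 0 < lam)
    (hk : Nat.floor ((N : ℝ) / (lam + 1)) + 1 ≤ N)
    (A : Finset (Fin N)) (hA : A.Nonempty) (hAproper : A ≠ Finset.univ) :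
    totalVariation N w (indicatorFun N A) /
        asymNorm N lam
          (fun i => indicatorFun N A i - lamMedian N lam (indicatorFun N A))
      = 2 * cutValue N w A / min (lam * (A.card : ℝ)) ((Aᶜ.card : ℝ)) := by
  have hcards : A.card + Aᶜ.card = N := by
    have := Finset.card_add_card_compl A
    rwa [Fintype.card_fin] at this
  have hpos : (0:ℝ) ≤ (N : ℝ) / (lam + 1) :=
    div_nonneg (Nat.cast_nonneg _) (by linarith)
  rw [tv_eq_two_cut N w hsymm A, indicator_median_eq N lam A hk]
  by_cases h : Nat.floor ((N : ℝ) / (lam + 1)) < A.card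
  · rw [if_pos h]
    -- here |Aᶜ| < λ|A|
    have h1 : (N : ℝ) / (lam + 1) < A.card := (Nat.floor_lt hpos).mp h
    have h2 : (N : ℝ) < (lam + 1) * A.card := by
      rw [div_lt_iff₀ (by linarith)] at h1; linarith
    have h3 : (Aᶜ.card : ℝ) ≤ lam * A.card := by
      have : (A.card : ℝ) + (Aᶜ.card : ℝ) = N := by exact_mod_cast hcards
      nlinarith
    rw [min_eq_right h3]
    congr 1
    -- norm = |Aᶜ|
    unfold asymNorm
    rw [← Finset.sum_add_sum_compl A (fun i => asymAbs lam (indicatorFun N A i - 1))]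
    have z : ∑ i ∈ A, asymAbs lam (indicatorFun N A i - 1) = 0 :=
      Finset.sum_eq_zero (fun i hi => by simp [indicatorFun, hi, asymAbs])
    have o : ∑ i ∈ Aᶜ, asymAbs lam (indicatorFun N A i - 1) = (Aᶜ.card : ℝ) := by
      have : ∀ i ∈ Aᶜ, asymAbs lam (indicatorFun N A i - 1) = 1 := fun i hi => by
        have hi' : i ∉ A := Finset.mem_compl.mp hi
        simp [indicatorFun, hi', asymAbs]
      rw [Finset.sum_congr rfl this, Finset.sum_const, nsmul_eq_mul, mul_one]
    rw [z, o, zero_add]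
  · rw [if_neg h]
    push_neg at h
    -- here λ|A| ≤ |Aᶜ|
    have h1 : (A.card : ℝ) ≤ (N : ℝ) / (lam + 1) := by
      calc (A.card : ℝ) ≤ (Nat.floor ((N : ℝ) / (lam + 1)) : ℝ) := by exact_mod_cast h
        _ ≤ (N : ℝ) / (lam + 1) := Nat.floor_le hpos
    have h2 : (lam + 1) * A.card ≤ (N : ℝ) := by
      rw [le_div_iff₀ (by linarith)] at h1; linarith
    have h3 : lam * A.card ≤ (Aᶜ.card : ℝ) := by
      have : (A.card : ℝ) + (Aᶜ.card : ℝ) = N := by exact_mod_cast hcards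
      nlinarith
    rw [min_eq_left h3]
    congr 1
    unfold asymNorm
    rw [← Finset.sum_add_sum_compl A (fun i => asymAbs lam (indicatorFun N A i - 0))]
    have o : ∑ i ∈ A, asymAbs lam (indicatorFun N A i - 0) = lam * A.card := by
      have : ∀ i ∈ A, asymAbs lam (indicatorFun N A i - 0) = lam := fun i hi => by
        simp [indicatorFun, hi, asymAbs]
      rw [Finset.sum_congr rfl this, Finset.sum_const, nsmul_eq_mul, mul_comm]
    have z : ∑ i ∈ Aᶜ, asymAbs lam (indicatorFun N A i - 0) = 0 :=
      Finset.sum_eq_zero (fun i hi => by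
        have hi' : i ∉ A := Finset.mem_compl.mp hi
        simp [indicatorFun, hi', asymAbs])
    rw [o, z, add_zero]
end

section
/- The balance functional B(f) := ‖f − med_λ(f)·1‖_{1,λ} is a convex function on ℝ^N. -/
/-- The balance functional `B(f) = ‖f − med_λ(f)·1‖_{1,λ}`. -/
noncomputable def balanceFun (N : ℕ) (lam : ℝ) (f : Fin N → ℝ) : ℝ :=
  asymNorm N lam (fun i => f i - lamMedian N lam f)

private lemma asymAbs_eq_max (lam : ℝ) (hlam : 0 < lam) (t : ℝ) :
    asymAbs lam t = max (lam * t) (-t) := by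
  unfold asymAbs
  split_ifs with h
  · rw [max_eq_left]; nlinarith
  · rw [max_eq_right]; nlinarith

private lemma card_filter_eq (N : ℕ) (f : Fin N → ℝ) (q : ℝ → Prop) [DecidablePred q] :
    (Finset.univ.filter (fun i => q (f i))).card
      = (((Finset.univ.val.map f).sort (· ≥ ·)).filter q).length := by
  have h1 : (Finset.univ.filter (fun i => q (f i))).card
      = Multiset.card ((Finset.univ.val.map f).filter q) := by
    rw [Multiset.filter_map]
    simp [Finset.filter, Function.comp]
  rw [h1]
  conv_lhs => rw [← Multiset.sort_eq (Finset.univ.val.map f) (· ≥ ·)]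
  rw [Multiset.filter_coe, Multiset.coe_card]

private lemma median_counts (N : ℕ) (lam : ℝ)
    (hk : Nat.floor ((N : ℝ) / (lam + 1)) + 1 ≤ N) (f : Fin N → ℝ) :
    (Finset.univ.filter (fun i => lamMedian N lam f < f i)).card
        ≤ Nat.floor ((N : ℝ) / (lam + 1)) ∧
      Nat.floor ((N : ℝ) / (lam + 1)) + 1
        ≤ (Finset.univ.filter (fun i => lamMedian N lam f ≤ f i)).card := by
  set k := Nat.floor ((N : ℝ) / (lam + 1)) with hkdef
  set l := ((Finset.univ.val.map f).sort (· ≥ ·)) with hldef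
  have hlen : l.length = N := by simp [hldef]
  have hkl : k < l.length := by omega
  have hsort : List.Pairwise (· ≥ ·) l := Multiset.pairwise_sort _ _
  have hm : lamMedian N lam f = l[k] := by
    rw [lamMedian, ← hldef, ← hkdef, List.getD_eq_getElem l 0 hkl]
  set m := lamMedian N lam f with hmdef
  have hrel : ∀ i j : ℕ, (hij : i ≤ j) → (hj : j < l.length) →
      l[j] ≤ l[i]'(Nat.lt_of_le_of_lt hij hj) := by
    intro i j hij hj
    rcases eq_or_lt_of_le hij with rfl | hij
    · exact le_refl _
    · exact List.Pairwise.rel_get_of_lt hsort (by simpa using hij)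
  constructor
  · rw [card_filter_eq]
    rw [← hldef]
    have hsplit : l.filter (fun x => decide (m < x)) =
        (l.take k).filter (fun x => decide (m < x))
          ++ (l.drop k).filter (fun x => decide (m < x)) := by
      rw [← List.filter_append, List.take_append_drop]
    have hnil : (l.drop k).filter (fun x => decide (m < x)) = [] := by
      rw [List.filter_eq_nil_iff]
      intro x hx
      rw [List.mem_drop_iff_getElem] at hx
      obtain ⟨i, hi, rfl⟩ := hx
      simp only [decide_eq_true_eq, not_lt]
      rw [hm]
      exact hrel k (k + i) (Nat.le_add_right _ _) _
    rw [hsplit, hnil]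
    simp only [List.length_append, List.length_nil, Nat.add_zero]
    calc ((l.take k).filter _).length ≤ (l.take k).length := List.length_filter_le _ _
      _ ≤ k := by simp
  · rw [card_filter_eq, ← hldef]
    have hsplit : l.filter (fun x => decide (m ≤ x)) =
        (l.take (k+1)).filter (fun x => decide (m ≤ x))
          ++ (l.drop (k+1)).filter (fun x => decide (m ≤ x)) := by
      rw [← List.filter_append, List.take_append_drop]
    have hall : (l.take (k+1)).filter (fun x => decide (m ≤ x)) = l.take (k+1) := by
      rw [List.filter_eq_self]
      intro x hx
      rw [List.mem_take_iff_getElem] at hx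
      obtain ⟨i, hi, rfl⟩ := hx
      simp only [decide_eq_true_eq]
      rw [hm]
      have hik : i ≤ k := by omega
      exact hrel i k hik hkl
    rw [hsplit]
    rw [List.length_append, hall, List.length_take]
    have : min (k+1) l.length = k + 1 := by omega
    omega

set_option maxHeartbeats 1000000 in
private lemma median_opt (N : ℕ) (lam : ℝ) (hlam : 0 < lam)
    (hk : Nat.floor ((N : ℝ) / (lam + 1)) + 1 ≤ N) (f : Fin N → ℝ) (c : ℝ) :
    balanceFun N lam f ≤ ∑ i, asymAbs lam (f i - c) := by
  set k := Nat.floor ((N : ℝ) / (lam + 1)) with hkdef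
  set m := lamMedian N lam f with hmdef
  have hlam1 : (0:ℝ) < lam + 1 := by linarith
  have hfloor1 : (k : ℝ) * (lam + 1) ≤ N := by
    have := Nat.floor_le (show (0:ℝ) ≤ (N : ℝ) / (lam + 1) by positivity)
    rw [← hkdef] at this
    calc (k:ℝ) * (lam+1) ≤ ((N:ℝ)/(lam+1)) * (lam+1) := by nlinarith
      _ = N := by field_simp
  have hfloor2 : (N : ℝ) < ((k : ℝ) + 1) * (lam + 1) := by
    have := Nat.lt_floor_add_one ((N : ℝ) / (lam + 1))
    rw [← hkdef] at this
    calc (N:ℝ) = ((N:ℝ)/(lam+1)) * (lam+1) := by field_simp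
      _ < ((k:ℝ)+1) * (lam+1) := by nlinarith
  obtain ⟨hcount1, hcount2⟩ := median_counts N lam hk f
  rw [← hmdef] at hcount1 hcount2
  rw [balanceFun, asymNorm, ← hmdef]
  rcases le_total m c with hmc | hcm
  · -- case m ≤ c
    set ψ : Fin N → ℝ := fun i => if f i ≤ m then c - m else -(lam * (c - m)) with hψ
    have h1 : ∀ i ∈ Finset.univ, asymAbs lam (f i - m) + ψ i ≤ asymAbs lam (f i - c) := by
      intro i _
      simp only [hψ, asymAbs]
      split_ifs <;> nlinarith
    have hsum1 := Finset.sum_le_sum h1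
    rw [Finset.sum_add_distrib] at hsum1
    have h2 : 0 ≤ ∑ i, ψ i := by
      rw [hψ, Finset.sum_ite, Finset.sum_const, Finset.sum_const]
      set A := Finset.univ.filter (fun i => f i ≤ m) with hA
      set B := Finset.univ.filter (fun i => ¬ (f i ≤ m)) with hB
      have hcards : A.card + B.card = N := by
        rw [hA, hB, Finset.card_filter_add_card_filter_not]
        simp
      have hBle : B.card ≤ k := by
        refine le_trans (le_of_eq ?_) hcount1
        congr 1
        rw [hB]
        congr 1
        ext i
        simp [not_le]
      have hAge : N - k ≤ A.card := by omega
      have hAgeR : (N : ℝ) - k ≤ A.card := by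
        have : ((N - k : ℕ) : ℝ) ≤ (A.card : ℝ) := by exact_mod_cast hAge
        rw [Nat.cast_sub (by omega)] at this
        exact this
      have hBleR : (B.card : ℝ) ≤ k := by exact_mod_cast hBle
      simp only [nsmul_eq_mul]
      have hcm0 : (0:ℝ) ≤ c - m := sub_nonneg.mpr hmc
      have e1 : (B.card:ℝ) * (lam * (c - m)) ≤ (k:ℝ) * (lam * (c - m)) :=
        mul_le_mul_of_nonneg_right hBleR (mul_nonneg hlam.le hcm0)
      have e2 : (k:ℝ) * (lam * (c - m)) ≤ ((N:ℝ) - k) * (c - m) := by nlinarith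
      have e3 : ((N:ℝ) - k) * (c - m) ≤ (A.card:ℝ) * (c - m) :=
        mul_le_mul_of_nonneg_right hAgeR hcm0
      nlinarith
    linarith
  · -- case c ≤ m
    set ψ : Fin N → ℝ := fun i => if m ≤ f i then lam * (m - c) else -(m - c) with hψ
    have h1 : ∀ i ∈ Finset.univ, asymAbs lam (f i - m) + ψ i ≤ asymAbs lam (f i - c) := by
      intro i _
      simp only [hψ, asymAbs]
      split_ifs <;> nlinarith
    have hsum1 := Finset.sum_le_sum h1
    rw [Finset.sum_add_distrib] at hsum1
    have h2 : 0 ≤ ∑ i, ψ i := by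
      rw [hψ, Finset.sum_ite, Finset.sum_const, Finset.sum_const]
      set A := Finset.univ.filter (fun i => m ≤ f i) with hA
      set B := Finset.univ.filter (fun i => ¬ (m ≤ f i)) with hB
      have hcards : A.card + B.card = N := by
        rw [hA, hB, Finset.card_filter_add_card_filter_not]
        simp
      have hAge : k + 1 ≤ A.card := hcount2
      have hBle : B.card ≤ N - (k+1) := by omega
      have hAgeR : (k : ℝ) + 1 ≤ A.card := by exact_mod_cast hAge
      have hBleR : (B.card : ℝ) ≤ (N : ℝ) - (k + 1) := by
        have : ((B.card : ℕ) : ℝ) ≤ ((N - (k+1) : ℕ) : ℝ) := by exact_mod_cast hBle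
        rw [Nat.cast_sub (by omega)] at this
        push_cast at this ⊢
        linarith
      simp only [nsmul_eq_mul]
      have hcm0 : (0:ℝ) ≤ m - c := sub_nonneg.mpr hcm
      have e1 : (B.card:ℝ) * (m - c) ≤ ((N:ℝ) - (k+1)) * (m - c) :=
        mul_le_mul_of_nonneg_right hBleR hcm0
      have e2 : ((N:ℝ) - (k+1)) * (m - c) ≤ (((k:ℝ)+1) * lam) * (m - c) := by nlinarith
      have e3 : (((k:ℝ)+1) * lam) * (m - c) ≤ (A.card:ℝ) * (lam * (m - c)) := by
        have h := mul_le_mul_of_nonneg_right hAgeR (mul_nonneg hlam.le hcm0)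
        linarith [h, mul_assoc ((k:ℝ)+1) lam (m-c)]
      nlinarith
    linarith

/-- the balance functional `B(f) = ‖f − med_λ(f)·1‖_{1,λ}` is convex on ℝ^N. -/
theorem balanceFun_convex (N : ℕ) (hN : 0 < N) (lam : ℝ) (hlam : 0 < lam)
    (hk : Nat.floor ((N : ℝ) / (lam + 1)) + 1 ≤ N) :
    ConvexOn ℝ Set.univ (balanceFun N lam) := by
  refine ⟨convex_univ, fun f _ g _ a b ha hb hab => ?_⟩
  set mf := lamMedian N lam f with hmf
  set mg := lamMedian N lam g with hmg
  calc balanceFun N lam (a • f + b • g)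
      ≤ ∑ i, asymAbs lam ((a • f + b • g) i - (a * mf + b * mg)) :=
        median_opt N lam hlam hk _ _
    _ ≤ ∑ i, (a * asymAbs lam (f i - mf) + b * asymAbs lam (g i - mg)) := by
        refine Finset.sum_le_sum fun i _ => ?_
        have harg : (a • f + b • g) i - (a * mf + b * mg)
            = a * (f i - mf) + b * (g i - mg) := by
          simp [Pi.add_apply, Pi.smul_apply, smul_eq_mul]; ring
        rw [harg, asymAbs_eq_max lam hlam, asymAbs_eq_max lam hlam, asymAbs_eq_max lam hlam]
        apply max_le
        · nlinarith [le_max_left (lam * (f i - mf)) (-(f i - mf)),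
            le_max_left (lam * (g i - mg)) (-(g i - mg))]
        · nlinarith [le_max_right (lam * (f i - mf)) (-(f i - mf)),
            le_max_right (lam * (g i - mg)) (-(g i - mg))]
    _ = a * balanceFun N lam f + b * balanceFun N lam g := by
        rw [Finset.sum_add_distrib, ← Finset.mul_sum, ← Finset.mul_sum]
        simp [balanceFun, asymNorm, hmf, hmg]
end

section
/- (Theorem 2, subgradient formula) Let f ∈ ℝ^N, and set n⁰ = #{i : f(x_i) = med_λ(f)}, n⁻ = #{i : f(x_i) < med_λ(f)}, n⁺ = #{i : f(x_i) > med_λ(f)}. Define v ∈ ℝ^N by v(x_i) = λ if f(x_i) > med_λ(f), v(x_i) = (n⁻ − λn⁺)/n⁰ if f(x_i) = med_λ(f), and v(x_i) = −1 if f(x_i) < med_λ(f). Then for every g ∈ ℝ^N, B(g) − B(f) ≥ ⟨v, g − f⟩, where B(f) := ‖f − med_λ(f)·1‖_{1,λ}; i.e., v is a subgradient of B at f. -/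
/-- The subgradient vector of `B` at `f` from Theorem 2: entries `λ` above the λ-median,
`−1` below it, and `(n⁻ − λn⁺)/n⁰` at it, where `n⁰, n⁻, n⁺` count the entries of `f`
equal to, below and above the λ-median respectively. -/
noncomputable def medSubgrad (N : ℕ) (lam : ℝ) (f : Fin N → ℝ) : Fin N → ℝ := fun i =>
  if lamMedian N lam f < f i then lam
  else if f i < lamMedian N lam f then -1
  else
    (((Finset.univ.filter fun j => f j < lamMedian N lam f).card : ℝ) -
        lam * ((Finset.univ.filter fun j => lamMedian N lam f < f j).card : ℝ)) /
      ((Finset.univ.filter fun j => f j = lamMedian N lam f).card : ℝ)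

private lemma asymAbs_ge {lam c : ℝ} (hc1 : -1 ≤ c) (hc2 : c ≤ lam) (s : ℝ) :
    c * s ≤ asymAbs lam s := by
  unfold asymAbs
  split_ifs with h
  · nlinarith
  · have hs : s < 0 := not_le.mp h
    nlinarith

private lemma sorted_countP_gt_le {L : List ℝ} (hs : L.Pairwise (· ≥ ·)) {k : ℕ}
    (hk : k < L.length) {m : ℝ} (hm : m = L[k]) :
    L.countP (fun x => decide (m < x)) ≤ k := by
  have h0 : (L.drop k).countP (fun x => decide (m < x)) = 0 := by
    rw [List.countP_eq_zero]
    intro a ha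
    obtain ⟨j, hj, rfl⟩ := List.mem_iff_getElem.mp ha
    rw [List.length_drop] at hj
    rw [List.getElem_drop]
    simp only [decide_eq_true_eq, not_lt]
    subst hm
    rcases Nat.eq_zero_or_pos j with rfl | hj0
    · simp
    · exact List.pairwise_iff_getElem.mp hs k (k + j) hk (by omega) (by omega)
  have hsplit := List.countP_append (l₁ := L.take k) (l₂ := L.drop k)
      (p := fun x => decide (m < x))
  rw [List.take_append_drop] at hsplit
  rw [hsplit, h0, add_zero]
  exact le_trans List.countP_le_length (by rw [List.length_take]; omega)

private lemma le_sorted_countP_ge {L : List ℝ} (hs : L.Pairwise (· ≥ ·)) {k : ℕ}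
    (hk : k < L.length) {m : ℝ} (hm : m = L[k]) :
    k + 1 ≤ L.countP (fun x => decide (m ≤ x)) := by
  have hall : ∀ a ∈ L.take (k + 1), (fun x => decide (m ≤ x)) a = true := by
    intro a ha
    obtain ⟨j, hj, rfl⟩ := List.mem_iff_getElem.mp ha
    rw [List.length_take] at hj
    rw [List.getElem_take]
    simp only [decide_eq_true_eq]
    subst hm
    have hjk : j ≤ k := by omega
    rcases eq_or_lt_of_le hjk with rfl | h
    · exact le_refl _
    · exact List.pairwise_iff_getElem.mp hs j k (by omega) hk h
  have h1 := List.countP_eq_length.mpr hall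
  have hlen : (L.take (k + 1)).length = k + 1 := by rw [List.length_take]; omega
  have h2 := List.countP_append (l₁ := L.take (k + 1)) (l₂ := L.drop (k + 1))
      (p := fun x => decide (m ≤ x))
  rw [List.take_append_drop] at h2
  rw [h2, h1, hlen]
  omega

private lemma card_filter_eq_countP {N : ℕ} (f : Fin N → ℝ) (p : ℝ → Prop) [DecidablePred p] :
    (Finset.univ.filter fun i => p (f i)).card
      = ((Finset.univ.val.map f).sort (· ≥ ·)).countP (fun a => decide (p a)) := by
  have h1 : (Finset.univ.filter fun i => p (f i)).card
      = Multiset.countP p (Finset.univ.val.map f) := by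
    rw [Multiset.countP_map]; rfl
  rw [h1]
  conv_lhs => rw [← Multiset.sort_eq (Finset.univ.val.map f) (· ≥ ·)]
  simp [Multiset.coe_countP]

private lemma median_mem {N : ℕ} (lam : ℝ) (f : Fin N → ℝ)
    (hk : Nat.floor ((N : ℝ) / (lam + 1)) + 1 ≤ N) :
    ∃ j, f j = lamMedian N lam f := by
  set L := ((Finset.univ.val.map f).sort (· ≥ ·)) with hL
  have hLlen : L.length = N := by simp [hL]
  have hkL : Nat.floor ((N : ℝ) / (lam + 1)) < L.length := by omega
  have hmL : lamMedian N lam f = L[Nat.floor ((N : ℝ) / (lam + 1))] :=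
    List.getD_eq_getElem L 0 hkL
  have hmem : lamMedian N lam f ∈ L := hmL ▸ List.getElem_mem hkL
  rw [hL, Multiset.mem_sort] at hmem
  obtain ⟨j, _, hj⟩ := Multiset.mem_map.mp hmem
  exact ⟨j, hj⟩

private lemma count_gt_le {N : ℕ} (lam : ℝ) (f : Fin N → ℝ)
    (hk : Nat.floor ((N : ℝ) / (lam + 1)) + 1 ≤ N) :
    (Finset.univ.filter fun j => lamMedian N lam f < f j).card
      ≤ Nat.floor ((N : ℝ) / (lam + 1)) := by
  set L := ((Finset.univ.val.map f).sort (· ≥ ·)) with hL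
  have hLlen : L.length = N := by simp [hL]
  have hkL : Nat.floor ((N : ℝ) / (lam + 1)) < L.length := by omega
  have hmL : lamMedian N lam f = L[Nat.floor ((N : ℝ) / (lam + 1))] :=
    List.getD_eq_getElem L 0 hkL
  have hs : L.Pairwise (· ≥ ·) := Multiset.pairwise_sort _ _
  rw [card_filter_eq_countP f (fun x => lamMedian N lam f < x)]
  exact sorted_countP_gt_le hs hkL hmL

private lemma le_count_ge {N : ℕ} (lam : ℝ) (f : Fin N → ℝ)
    (hk : Nat.floor ((N : ℝ) / (lam + 1)) + 1 ≤ N) :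
    Nat.floor ((N : ℝ) / (lam + 1)) + 1
      ≤ (Finset.univ.filter fun j => lamMedian N lam f ≤ f j).card := by
  set L := ((Finset.univ.val.map f).sort (· ≥ ·)) with hL
  have hLlen : L.length = N := by simp [hL]
  have hkL : Nat.floor ((N : ℝ) / (lam + 1)) < L.length := by omega
  have hmL : lamMedian N lam f = L[Nat.floor ((N : ℝ) / (lam + 1))] :=
    List.getD_eq_getElem L 0 hkL
  have hs : L.Pairwise (· ≥ ·) := Multiset.pairwise_sort _ _
  rw [card_filter_eq_countP f (fun x => lamMedian N lam f ≤ x)]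
  exact le_sorted_countP_ge hs hkL hmL

-- combined counting facts, all as real inequalities
private lemma count_facts {N : ℕ} {lam : ℝ} (hlam : 0 < lam)
    (hk : Nat.floor ((N : ℝ) / (lam + 1)) + 1 ≤ N) (f : Fin N → ℝ) :
    0 < ((Finset.univ.filter fun j => f j = lamMedian N lam f).card : ℝ) ∧
    -1 ≤ (((Finset.univ.filter fun j => f j < lamMedian N lam f).card : ℝ) -
        lam * ((Finset.univ.filter fun j => lamMedian N lam f < f j).card : ℝ)) /
      ((Finset.univ.filter fun j => f j = lamMedian N lam f).card : ℝ) ∧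
    (((Finset.univ.filter fun j => f j < lamMedian N lam f).card : ℝ) -
        lam * ((Finset.univ.filter fun j => lamMedian N lam f < f j).card : ℝ)) /
      ((Finset.univ.filter fun j => f j = lamMedian N lam f).card : ℝ) ≤ lam := by
  classical
  set m := lamMedian N lam f with hm
  set k := Nat.floor ((N : ℝ) / (lam + 1)) with hkdef
  set Ap := Finset.univ.filter fun j => m < f j with hAp
  set An := Finset.univ.filter fun j => f j < m with hAn
  set Az := Finset.univ.filter fun j => f j = m with hAz
  set Age := Finset.univ.filter fun j => m ≤ f j with hAge
  have hzpos : 0 < Az.card := by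
    obtain ⟨j, hj⟩ := median_mem lam f hk
    exact Finset.card_pos.mpr ⟨j, by simp [hAz, hj, hm]⟩
  have hgt : Ap.card ≤ k := count_gt_le lam f hk
  have hge : k + 1 ≤ Age.card := le_count_ge lam f hk
  have hsplit : Age.card = Az.card + Ap.card := by
    rw [hAge, hAz, hAp, ← Finset.card_union_of_disjoint ?_]
    · congr 1
      ext i
      simp only [Finset.mem_union, Finset.mem_filter, Finset.mem_univ, true_and]
      constructor
      · intro h
        rcases eq_or_lt_of_le h with h' | h'
        exacts [Or.inl h'.symm, Or.inr h']
      · rintro (h | h)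
        exacts [h.ge, h.le]
    · rw [Finset.disjoint_left]
      intro a ha hb
      simp only [Finset.mem_filter, Finset.mem_univ, true_and] at ha hb
      exact lt_irrefl m (ha ▸ hb)
  have htotal : Age.card + An.card = N := by
    have h := Finset.card_filter_add_card_filter_not
      (s := (Finset.univ : Finset (Fin N))) (p := fun j => m ≤ f j)
    simp only [not_le, Finset.card_univ, Fintype.card_fin] at h
    rw [hAge, hAn]
    exact h
  -- real versions
  have hc1 : (0:ℝ) < lam + 1 := by linarith
  have hf1 : (lam + 1) * (k : ℝ) ≤ N := by
    have h := Nat.floor_le (show (0:ℝ) ≤ (N : ℝ) / (lam + 1) from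
      div_nonneg (Nat.cast_nonneg N) hc1.le)
    rw [← hkdef] at h
    rw [le_div_iff₀ hc1] at h
    linarith
  have hf2 : (N : ℝ) < (lam + 1) * ((k : ℝ) + 1) := by
    have h := Nat.lt_floor_add_one ((N : ℝ) / (lam + 1))
    rw [← hkdef] at h
    rw [div_lt_iff₀ hc1] at h
    linarith
  have ha : (Ap.card : ℝ) ≤ (k : ℝ) := Nat.cast_le.mpr hgt
  have hb : ((k : ℝ) + 1) ≤ (Az.card : ℝ) + (Ap.card : ℝ) := by
    have := Nat.cast_le (α := ℝ).mpr hge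
    rw [hsplit] at this
    push_cast at this
    push_cast
    linarith
  have hco : (An.card : ℝ) = (N : ℝ) - (Az.card : ℝ) - (Ap.card : ℝ) := by
    have : (Age.card : ℝ) + (An.card : ℝ) = N := by exact_mod_cast congrArg (Nat.cast (R := ℝ)) htotal
    rw [show (Age.card : ℝ) = (Az.card : ℝ) + (Ap.card : ℝ) by exact_mod_cast congrArg (Nat.cast (R := ℝ)) hsplit] at this
    linarith
  have hzposR : (0:ℝ) < (Az.card : ℝ) := by exact_mod_cast hzpos
  refine ⟨hzposR, ?_, ?_⟩
  · rw [le_div_iff₀ hzposR]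
    nlinarith
  · rw [div_le_iff₀ hzposR]
    nlinarith

private lemma medSubgrad_bounds {N : ℕ} {lam : ℝ} (hlam : 0 < lam)
    (hk : Nat.floor ((N : ℝ) / (lam + 1)) + 1 ≤ N) (f : Fin N → ℝ) (i : Fin N) :
    -1 ≤ medSubgrad N lam f i ∧ medSubgrad N lam f i ≤ lam ∧
      medSubgrad N lam f i * (f i - lamMedian N lam f)
        = asymAbs lam (f i - lamMedian N lam f) := by
  obtain ⟨h0, hlo, hhi⟩ := count_facts hlam hk f
  unfold medSubgrad
  split_ifs with h1 h2
  · refine ⟨by linarith, le_refl _, ?_⟩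
    unfold asymAbs
    rw [if_pos (by linarith : (0:ℝ) ≤ f i - lamMedian N lam f)]
  · refine ⟨le_refl _, by linarith, ?_⟩
    unfold asymAbs
    rw [if_neg (by simp only [not_le]; linarith : ¬ (0:ℝ) ≤ f i - lamMedian N lam f)]
    ring
  · have heq : f i = lamMedian N lam f := le_antisymm (not_lt.mp h1) (not_lt.mp h2)
    refine ⟨hlo, hhi, ?_⟩
    rw [heq, sub_self]
    unfold asymAbs
    simp

private lemma medSubgrad_sum {N : ℕ} {lam : ℝ} (hlam : 0 < lam)
    (hk : Nat.floor ((N : ℝ) / (lam + 1)) + 1 ≤ N) (f : Fin N → ℝ) :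
    ∑ i, medSubgrad N lam f i = 0 := by
  classical
  obtain ⟨h0, -, -⟩ := count_facts hlam hk f
  set m := lamMedian N lam f with hm
  set Ap := Finset.univ.filter fun j => m < f j with hAp
  set An := Finset.univ.filter fun j => f j < m with hAn
  set Az := Finset.univ.filter fun j => f j = m with hAz
  set v0 : ℝ := ((An.card : ℝ) - lam * (Ap.card : ℝ)) / (Az.card : ℝ) with hv0
  have hvp : ∀ i ∈ Ap, medSubgrad N lam f i = lam := by
    intro i hi
    rw [hAp, Finset.mem_filter] at hi
    unfold medSubgrad
    rw [← hm, if_pos hi.2]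
  have hvn : ∀ i ∈ An, medSubgrad N lam f i = -1 := by
    intro i hi
    rw [hAn, Finset.mem_filter] at hi
    unfold medSubgrad
    rw [← hm, if_neg (by push_neg; exact hi.2.le), if_pos hi.2]
  have hvz : ∀ i ∈ Az, medSubgrad N lam f i = v0 := by
    intro i hi
    rw [hAz, Finset.mem_filter] at hi
    unfold medSubgrad
    rw [← hm, if_neg (by push_neg; exact hi.2.le), if_neg (by push_neg; exact hi.2.ge)]
  have hd1 : Disjoint Ap An := by
    rw [Finset.disjoint_left]
    intro a ha hb
    rw [hAp, Finset.mem_filter] at ha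
    rw [hAn, Finset.mem_filter] at hb
    linarith [ha.2, hb.2]
  have hd2 : Disjoint (Ap ∪ An) Az := by
    rw [Finset.disjoint_left]
    intro a ha hb
    rw [Finset.mem_union, hAp, hAn, Finset.mem_filter, Finset.mem_filter] at ha
    rw [hAz, Finset.mem_filter] at hb
    rcases ha with h | h
    · exact absurd (hb.2 ▸ h.2) (lt_irrefl m)
    · exact absurd (hb.2 ▸ h.2) (lt_irrefl m)
  have huniv : (Finset.univ : Finset (Fin N)) = (Ap ∪ An) ∪ Az := by
    ext i
    simp only [Finset.mem_union, hAp, hAn, hAz, Finset.mem_filter, Finset.mem_univ, true_and, true_iff]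
    rcases lt_trichotomy (f i) m with h | h | h
    exacts [Or.inl (Or.inr h), Or.inr h, Or.inl (Or.inl h)]
  have hAzcard : (Az.card : ℝ) ≠ 0 := ne_of_gt h0
  calc ∑ i, medSubgrad N lam f i
      = ∑ i ∈ (Ap ∪ An) ∪ Az, medSubgrad N lam f i := by rw [← huniv]
    _ = (∑ i ∈ Ap, medSubgrad N lam f i + ∑ i ∈ An, medSubgrad N lam f i)
        + ∑ i ∈ Az, medSubgrad N lam f i := by
        rw [Finset.sum_union hd2, Finset.sum_union hd1]
    _ = ((Ap.card : ℝ) * lam + (An.card : ℝ) * (-1)) + (Az.card : ℝ) * v0 := by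
        rw [Finset.sum_congr rfl hvp, Finset.sum_congr rfl hvn, Finset.sum_congr rfl hvz,
          Finset.sum_const, Finset.sum_const, Finset.sum_const, nsmul_eq_mul, nsmul_eq_mul,
          nsmul_eq_mul]
    _ = 0 := by
        rw [hv0]
        field_simp
        ring

/-- Theorem 2, subgradient formula: the vector `v = medSubgrad f`
is a subgradient of `B` at `f`: `B(g) − B(f) ≥ ⟨v, g − f⟩` for all `g ∈ ℝ^N`. -/
theorem balanceFun_subgradient (N : ℕ) (hN : 0 < N) (lam : ℝ) (hlam : 0 < lam)
    (hk : Nat.floor ((N : ℝ) / (lam + 1)) + 1 ≤ N) (f : Fin N → ℝ) :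
    ∀ g : Fin N → ℝ,
      balanceFun N lam g - balanceFun N lam f ≥
        ∑ i, medSubgrad N lam f i * (g i - f i) := by
  intro g
  have hbounds := fun i => medSubgrad_bounds hlam hk f i
  have hsum := medSubgrad_sum hlam hk f
  set m := lamMedian N lam f with hm
  set m' := lamMedian N lam g with hm'
  have key : ∀ i : Fin N, medSubgrad N lam f i * ((g i - m') - (f i - m))
      ≤ asymAbs lam (g i - m') - asymAbs lam (f i - m) := by
    intro i
    obtain ⟨h1, h2, h3⟩ := hbounds i
    have h4 := asymAbs_ge h1 h2 (g i - m')
    have h5 : medSubgrad N lam f i * ((g i - m') - (f i - m))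
        = medSubgrad N lam f i * (g i - m') - medSubgrad N lam f i * (f i - m) := by ring
    rw [h5, h3]
    linarith
  have hBg : balanceFun N lam g = ∑ i, asymAbs lam (g i - m') := rfl
  have hBf : balanceFun N lam f = ∑ i, asymAbs lam (f i - m) := rfl
  rw [ge_iff_le, hBg, hBf, ← Finset.sum_sub_distrib]
  calc ∑ i, medSubgrad N lam f i * (g i - f i)
      = ∑ i, (medSubgrad N lam f i * ((g i - m') - (f i - m))
          + (m' - m) * medSubgrad N lam f i) := by
        apply Finset.sum_congr rfl
        intro i _
        ring
    _ = ∑ i, medSubgrad N lam f i * ((g i - m') - (f i - m))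
        + (m' - m) * ∑ i, medSubgrad N lam f i := by
        rw [Finset.sum_add_distrib, Finset.mul_sum]
    _ = ∑ i, medSubgrad N lam f i * ((g i - m') - (f i - m)) := by
        rw [hsum, mul_zero, add_zero]
    _ ≤ ∑ i, (asymAbs lam (g i - m') - asymAbs lam (f i - m)) :=
        Finset.sum_le_sum fun i _ => key i
end

section
/- Let E be a finite-dimensional real inner product space, C ⊆ E a nonempty convex set, 𝓣 : E → ℝ a convex function, F ∈ C, and V ∈ E. Suppose F' ∈ C minimizes G ↦ 𝓣(G) + (1/2)‖G − (F + V)‖² over C. Then 𝓣(F) ≥ 𝓣(F') + ‖F − F'‖² + ⟨F − F', V⟩. -/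
/-- if `F' ∈ C` minimizes `G ↦ 𝓣(G) + (1/2)‖G − (F + V)‖²` over the
nonempty convex set `C`, `𝓣` convex, `F ∈ C`, then
`𝓣(F) ≥ 𝓣(F') + ‖F − F'‖² + ⟨F − F', V⟩`. -/
theorem prox_step_inequality {E : Type*} [NormedAddCommGroup E]
    [InnerProductSpace ℝ E] [FiniteDimensional ℝ E]
    (C : Set E) (hCne : C.Nonempty) (hCconv : Convex ℝ C)
    (T : E → ℝ) (hT : ConvexOn ℝ Set.univ T)
    (F V F' : E) (hF : F ∈ C) (hF' : F' ∈ C)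
    (hmin : ∀ G ∈ C, T F' + (1 / 2) * ‖F' - (F + V)‖ ^ 2 ≤
        T G + (1 / 2) * ‖G - (F + V)‖ ^ 2) :
    T F ≥ T F' + ‖F - F'‖ ^ 2 + (inner ℝ (F - F') V : ℝ) := by
  set d : E := F - F' with hd
  set y : E := F + V with hy
  -- rewrite goal as T F' + ⟨d, y - F'⟩ ≤ T F
  have hgoal : ‖F - F'‖ ^ 2 + (inner ℝ (F - F') V : ℝ) = (inner ℝ d (y - F') : ℝ) := by
    have : y - F' = d + V := by simp [hd, hy]; abel
    rw [this, inner_add_right, ← real_inner_self_eq_norm_sq]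
  rw [ge_iff_le, add_assoc, hgoal]
  -- suffices: for all ε > 0
  refine le_of_forall_pos_le_add fun ε hε => ?_
  -- choose t
  obtain ⟨t, ht0, ht1, htε⟩ : ∃ t : ℝ, 0 < t ∧ t ≤ 1 ∧ (t / 2) * ‖d‖ ^ 2 ≤ ε := by
    by_cases hdz : ‖d‖ ^ 2 = 0
    · exact ⟨1, one_pos, le_refl 1, by rw [hdz]; simpa using hε.le⟩
    · have hdp : 0 < ‖d‖ ^ 2 := lt_of_le_of_ne (by positivity) (Ne.symm hdz)
      refine ⟨min 1 (2 * ε / ‖d‖ ^ 2), lt_min one_pos (by positivity), min_le_left _ _, ?_⟩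
      have : min 1 (2 * ε / ‖d‖ ^ 2) ≤ 2 * ε / ‖d‖ ^ 2 := min_le_right _ _
      calc min 1 (2 * ε / ‖d‖ ^ 2) / 2 * ‖d‖ ^ 2 ≤ (2 * ε / ‖d‖ ^ 2) / 2 * ‖d‖ ^ 2 := by
            gcongr
        _ = ε := by rw [show (2 * ε / ‖d‖ ^ 2) / 2 * ‖d‖ ^ 2 = ε * (‖d‖ ^ 2 / ‖d‖ ^ 2) by ring, div_self hdp.ne', mul_one]
  set G : E := F' + t • d with hG
  have hGC : G ∈ C := by
    have := hCconv hF' hF (by linarith : (0:ℝ) ≤ 1 - t) (le_of_lt ht0) (by ring)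
    have hGe : (1 - t) • F' + t • F = G := by
      rw [hG, hd]; rw [smul_sub]; module
    rwa [hGe] at this
  have hTG : T G ≤ (1 - t) * T F' + t * T F := by
    have := hT.2 (Set.mem_univ F') (Set.mem_univ F) (by linarith : (0:ℝ) ≤ 1 - t)
      (le_of_lt ht0) (by ring : (1 - t) + t = 1)
    have hGe : (1 - t) • F' + t • F = G := by
      rw [hG, hd]; rw [smul_sub]; module
    rwa [hGe, smul_eq_mul, smul_eq_mul] at this
  have hnorm : ‖G - y‖ ^ 2 = ‖F' - y‖ ^ 2 + 2 * t * (inner ℝ (F' - y) d : ℝ)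
      + t ^ 2 * ‖d‖ ^ 2 := by
    have hGy : G - y = (F' - y) + t • d := by rw [hG]; abel
    rw [hGy, norm_add_sq_real, real_inner_smul_right, norm_smul]
    simp [mul_pow, abs_of_pos ht0]
    ring
  have hm := hmin G hGC
  -- T F' + ½‖F'-y‖² ≤ T G + ½‖G-y‖²
  have key : t * T F' ≤ t * T F + t * (inner ℝ (F' - y) d : ℝ) + (t ^ 2 / 2) * ‖d‖ ^ 2 := by
    rw [hnorm] at hm
    nlinarith [hm, hTG]
  have key2 : T F' ≤ T F + (inner ℝ (F' - y) d : ℝ) + (t / 2) * ‖d‖ ^ 2 := by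
    have h : t * T F' ≤ t * (T F + (inner ℝ (F' - y) d : ℝ) + (t / 2) * ‖d‖ ^ 2) := by
      calc t * T F' ≤ t * T F + t * (inner ℝ (F' - y) d : ℝ) + (t ^ 2 / 2) * ‖d‖ ^ 2 := key
        _ = t * (T F + (inner ℝ (F' - y) d : ℝ) + (t / 2) * ‖d‖ ^ 2) := by ring
    exact le_of_mul_le_mul_left h ht0
  have hinner : (inner ℝ (F' - y) d : ℝ) = -(inner ℝ d (y - F') : ℝ) := by
    have h1 : F' - y = -(y - F') := by abel
    rw [h1, inner_neg_left, real_inner_comm]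
  rw [hinner] at key2
  linarith
end

section
/- Let E be a finite-dimensional real inner product space, C ⊆ E a nonempty convex set, and 𝓣, 𝓑 : E → ℝ convex functions. Let F ∈ C with 𝓣(F) = 𝓑(F), let V be a subgradient of 𝓑 at F (i.e., 𝓑(G) ≥ 𝓑(F) + ⟨G − F, V⟩ for all G ∈ E), and suppose F' ∈ C minimizes G ↦ 𝓣(G) + (1/2)‖G − (F + V)‖² over C. Then 𝓑(F') ≥ 𝓣(F') + ‖F − F'‖². -/
/-- let `𝓣, 𝓑` be convex, `F ∈ C` with `𝓣(F) = 𝓑(F)`, `V` a subgradient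
of `𝓑` at `F`, and suppose `F' ∈ C` minimizes `G ↦ 𝓣(G) + (1/2)‖G − (F + V)‖²` over the
nonempty convex set `C`. Then `𝓑(F') ≥ 𝓣(F') + ‖F − F'‖²`. -/
theorem prox_step_descent {E : Type*} [NormedAddCommGroup E]
    [InnerProductSpace ℝ E] [FiniteDimensional ℝ E]
    (C : Set E) (hCne : C.Nonempty) (hCconv : Convex ℝ C)
    (T B : E → ℝ) (hT : ConvexOn ℝ Set.univ T) (hB : ConvexOn ℝ Set.univ B)
    (F V F' : E) (hF : F ∈ C) (hTB : T F = B F)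
    (hsub : ∀ G : E, B G ≥ B F + (inner ℝ (G - F) V : ℝ))
    (hF' : F' ∈ C)
    (hmin : ∀ G ∈ C, T F' + (1 / 2) * ‖F' - (F + V)‖ ^ 2 ≤
        T G + (1 / 2) * ‖G - (F + V)‖ ^ 2) :
    B F' ≥ T F' + ‖F - F'‖ ^ 2 := by
  by_cases hFF : F = F'
  · subst hFF
    simp only [sub_self, norm_zero]
    simpa [hTB] using le_of_eq hTB.symm
  -- main case
  have hdpos : (0:ℝ) < ‖F - F'‖ ^ 2 := by
    exact pow_pos ((norm_sub_pos_iff (E := E)).mpr hFF) 2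
  have key : ∀ t : ℝ, 0 < t → t ≤ 1 →
      T F' ≤ T F + (inner ℝ (F' - (F + V)) (F - F') : ℝ) + t / 2 * ‖F - F'‖ ^ 2 := by
    intro t ht ht1
    have hmem : (1 - t) • F' + t • F ∈ C :=
      hCconv hF' hF (by linarith) ht.le (by ring)
    have heq : (1 - t) • F' + t • F = F' + t • (F - F') := by
      rw [smul_sub]; module
    rw [heq] at hmem
    have hconv := hT.2 (Set.mem_univ F') (Set.mem_univ F)
      (by linarith : (0:ℝ) ≤ 1 - t) ht.le (by ring)
    rw [heq] at hconv
    have hm := hmin _ hmem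
    have hdecomp : F' + t • (F - F') - (F + V) = (F' - (F + V)) + t • (F - F') := by
      abel
    have hnorm : ‖F' + t • (F - F') - (F + V)‖ ^ 2
        = ‖F' - (F + V)‖ ^ 2 + 2 * (t * (inner ℝ (F' - (F + V)) (F - F') : ℝ))
          + t ^ 2 * ‖F - F'‖ ^ 2 := by
      rw [hdecomp, norm_add_sq_real, real_inner_smul_right, norm_smul]
      simp only [Real.norm_eq_abs, mul_pow, sq_abs]
    rw [hnorm] at hm
    simp only [smul_eq_mul] at hconv
    have hmul : t * T F' ≤ t * (T F + (inner ℝ (F' - (F + V)) (F - F') : ℝ)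
        + t / 2 * ‖F - F'‖ ^ 2) := by nlinarith [hm, hconv]
    exact le_of_mul_le_mul_left hmul ht
  have hmain : T F' ≤ T F + (inner ℝ (F' - (F + V)) (F - F') : ℝ) := by
    refine le_of_forall_pos_le_add ?_
    intro ε hε
    set t : ℝ := min 1 (2 * ε / ‖F - F'‖ ^ 2) with ht_def
    have ht0 : 0 < t := lt_min one_pos (by positivity)
    have ht1 : t ≤ 1 := min_le_left _ _
    have h1 := key t ht0 ht1
    have : t / 2 * ‖F - F'‖ ^ 2 ≤ ε := by
      have h2 : t ≤ 2 * ε / ‖F - F'‖ ^ 2 := min_le_right _ _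
      rw [div_mul_eq_mul_div, div_le_iff₀ (by norm_num : (0:ℝ) < 2)]
      calc t * ‖F - F'‖ ^ 2 ≤ (2 * ε / ‖F - F'‖ ^ 2) * ‖F - F'‖ ^ 2 := by
            exact mul_le_mul_of_nonneg_right h2 hdpos.le
        _ = ε * 2 := by rw [div_mul_cancel₀ _ hdpos.ne']; ring
    linarith
  -- combine with subgradient inequality
  have hsub' := hsub F'
  have hinner : (inner ℝ (F' - (F + V)) (F - F') : ℝ)
      = -(‖F - F'‖ ^ 2) + (inner ℝ (F' - F) V : ℝ) := by
    have h1 : F' - (F + V) = (F' - F) - V := by abel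
    rw [h1, inner_sub_left]
    have h2 : (inner ℝ (F' - F) (F - F') : ℝ) = -(‖F - F'‖ ^ 2) := by
      rw [show F' - F = -(F - F') by abel, inner_neg_left,
        real_inner_self_eq_norm_sq]
    have h3 : (inner ℝ V (F - F') : ℝ) = -(inner ℝ (F' - F) V : ℝ) := by
      rw [real_inner_comm, show F - F' = -(F' - F) by abel, inner_neg_left]
    rw [h2, h3]; ring
  rw [hinner] at hmain
  linarith [hsub', hTB]
end
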